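/- arXiv:1005.5680 — 6 statements merged into one kernel-verified Lean document; each statement's English description precedes it below -/
import Mathlib

section
/- Let R be a commutative k-algebra, E a faithful R-module (r·E = 0 implies r = 0), ρ : E → Der_k(R) an R-linear map, [.,.] : E × E → E a skew-symmetric k-bilinear bracket, and H : E × E × E → E an alternating R-trilinear map with ρ∘H = 0. Assume the Leibniz rule [φ, f·ψ] = ρ(φ)(f)·ψ + f·[φ,ψ] and the twisted Jacobi identity [φ,[ψ₁,ψ₂]] = [[φ,ψ₁],ψ₂] + [ψ₁,[φ,ψ₂]] + H(φ,ψ₁,ψ₂) for all φ,ψ,ψ₁,ψ₂ ∈ E, f ∈ R. Then the anchor is automatically a morphism of brackets: ρ([ψ₁,ψ₂]) = ρ(ψ₁)∘ρ(ψ₂) − ρ(ψ₂)∘ρ(ψ₁) for all ψ₁,ψ₂ ∈ E. -/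
/-- For a faithful `R`-module `E` with anchor `ρ`, skew-symmetric `k`-bilinear
bracket satisfying the Leibniz rule, and alternating `R`-trilinear twist `H` with `ρ∘H = 0`
satisfying the twisted Jacobi identity, the anchor is automatically a morphism of brackets:
`ρ([ψ₁,ψ₂]) = ρ(ψ₁)∘ρ(ψ₂) − ρ(ψ₂)∘ρ(ψ₁)`. -/
theorem anchor_is_bracket_morphism
    {k R E : Type*} [Field k] [CommRing R] [Algebra k R]
    [AddCommGroup E] [Module k E] [Module R E] [IsScalarTower k R E]
    -- E is a faithful R-module
    (faithful : ∀ r : R, (∀ ψ : E, r • ψ = 0) → r = 0)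
    (ρ : E →ₗ[R] Derivation k R R)
    (br : E → E → E)
    (br_add_left : ∀ φ₁ φ₂ ψ : E, br (φ₁ + φ₂) ψ = br φ₁ ψ + br φ₂ ψ)
    (br_smul_left : ∀ (a : k) (φ ψ : E), br (a • φ) ψ = a • br φ ψ)
    (br_skew : ∀ φ ψ : E, br φ ψ = - br ψ φ)
    -- H is an alternating R-trilinear map
    (H : E →ₗ[R] E →ₗ[R] E →ₗ[R] E)
    (H_alt₁₂ : ∀ φ ψ : E, H φ φ ψ = 0)
    (H_alt₂₃ : ∀ φ ψ : E, H φ ψ ψ = 0)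
    -- with values in ker ρ, i.e. ρ∘H = 0
    (H_ker : ∀ φ ψ χ : E, ρ (H φ ψ χ) = 0)
    -- Leibniz rule
    (leibniz : ∀ (φ : E) (f : R) (ψ : E), br φ (f • ψ) = ρ φ f • ψ + f • br φ ψ)
    -- twisted Jacobi identity
    (jacobi : ∀ φ ψ₁ ψ₂ : E,
      br φ (br ψ₁ ψ₂) = br (br φ ψ₁) ψ₂ + br ψ₁ (br φ ψ₂) + H φ ψ₁ ψ₂) :
    ∀ ψ₁ ψ₂ : E, ρ (br ψ₁ ψ₂) = ⁅ρ ψ₁, ρ ψ₂⁆ := by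
  intro ψ₁ ψ₂
  have br_add_right : ∀ φ a b : E, br φ (a + b) = br φ a + br φ b := by
    intro φ a b
    rw [br_skew φ (a + b), br_add_left, neg_add, ← br_skew, ← br_skew]
  ext f
  have key : ρ (br ψ₁ ψ₂) f - (ρ ψ₁ (ρ ψ₂ f) - ρ ψ₂ (ρ ψ₁ f)) = 0 := by
    apply faithful
    intro χ
    have h1 := jacobi ψ₁ ψ₂ (f • χ)
    have h2 := jacobi ψ₁ ψ₂ χ
    rw [leibniz ψ₂ f χ, br_add_right, leibniz, leibniz,
        leibniz (br ψ₁ ψ₂) f χ, leibniz ψ₁ f χ, br_add_right, leibniz ψ₂,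
        map_smul, h2, smul_add, smul_add, leibniz ψ₂ f (br ψ₁ χ)] at h1
    linear_combination (norm := module) -h1
  have := sub_eq_zero.mp key
  rw [this]
  simp [Derivation.commutator_apply]
end

section
/- Let (R, E, [.,.], ρ, H) be an H-twisted Lie–Rinehart algebra and α : E → R an R-linear map (an E-1-form). Define Dα(ψ₀,ψ₁) = ρ(ψ₀)(α(ψ₁)) − ρ(ψ₁)(α(ψ₀)) − α([ψ₀,ψ₁]) and, for a scalar-valued alternating 2-form ω, Dω(ψ₀,ψ₁,ψ₂) = Σ_{i=0}^{2} (−1)^i ρ(ψ_i)(ω(…,ψ̂_i,…)) + Σ_{i<j} (−1)^{i+j} ω([ψ_i,ψ_j], ψ̂_i,ψ̂_j-omitted remaining argument). Then D(Dα)(ψ₀,ψ₁,ψ₂) = −α(H(ψ₀,ψ₁,ψ₂)) for all ψ₀,ψ₁,ψ₂ ∈ E. -/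
/-- For an `H`-twisted Lie–Rinehart algebra and an `E`-1-form `α : E → R`,
the square of the Chevalley–Eilenberg-type differential is given by insertion of `−H`:
`D(Dα)(ψ₀,ψ₁,ψ₂) = −α(H(ψ₀,ψ₁,ψ₂))`. -/
theorem d_squared_of_one_form
    {k R E : Type*} [Field k] [CommRing R] [Algebra k R]
    [AddCommGroup E] [Module k E] [Module R E] [IsScalarTower k R E]
    (ρ : E →ₗ[R] Derivation k R R)
    (br : E → E → E)
    (br_add_left : ∀ φ₁ φ₂ ψ : E, br (φ₁ + φ₂) ψ = br φ₁ ψ + br φ₂ ψ)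
    (br_smul_left : ∀ (a : k) (φ ψ : E), br (a • φ) ψ = a • br φ ψ)
    (br_skew : ∀ φ ψ : E, br φ ψ = - br ψ φ)
    (H : E →ₗ[R] E →ₗ[R] E →ₗ[R] E)
    (H_alt₁₂ : ∀ φ ψ : E, H φ φ ψ = 0)
    (H_alt₂₃ : ∀ φ ψ : E, H φ ψ ψ = 0)
    (H_ker : ∀ φ ψ χ : E, ρ (H φ ψ χ) = 0)
    (leibniz : ∀ (φ : E) (f : R) (ψ : E), br φ (f • ψ) = ρ φ f • ψ + f • br φ ψ)
    (jacobi : ∀ φ ψ₁ ψ₂ : E,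
      br φ (br ψ₁ ψ₂) = br (br φ ψ₁) ψ₂ + br ψ₁ (br φ ψ₂) + H φ ψ₁ ψ₂)
    (anchor_br : ∀ φ ψ : E, ρ (br φ ψ) = ⁅ρ φ, ρ ψ⁆)
    -- an E-1-form α and its differential Dα
    (α : E →ₗ[R] R)
    (Dα : E → E → R)
    (hDα : ∀ ψ₀ ψ₁ : E, Dα ψ₀ ψ₁ = ρ ψ₀ (α ψ₁) - ρ ψ₁ (α ψ₀) - α (br ψ₀ ψ₁))
    -- the second differential D(Dα)
    (DDα : E → E → E → R)
    (hDDα : ∀ ψ₀ ψ₁ ψ₂ : E, DDα ψ₀ ψ₁ ψ₂ =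
      ρ ψ₀ (Dα ψ₁ ψ₂) - ρ ψ₁ (Dα ψ₀ ψ₂) + ρ ψ₂ (Dα ψ₀ ψ₁)
        - Dα (br ψ₀ ψ₁) ψ₂ + Dα (br ψ₀ ψ₂) ψ₁ - Dα (br ψ₁ ψ₂) ψ₀) :
    ∀ ψ₀ ψ₁ ψ₂ : E, DDα ψ₀ ψ₁ ψ₂ = - α (H ψ₀ ψ₁ ψ₂) := by
  intro ψ₀ ψ₁ ψ₂
  have h1 : br (br ψ₀ ψ₁) ψ₂ = br ψ₀ (br ψ₁ ψ₂) - br ψ₁ (br ψ₀ ψ₂) - H ψ₀ ψ₁ ψ₂ := by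
    rw [jacobi]; abel
  have h2 : br (br ψ₀ ψ₂) ψ₁ = - br ψ₁ (br ψ₀ ψ₂) := br_skew _ _
  have h3 : br (br ψ₁ ψ₂) ψ₀ = - br ψ₀ (br ψ₁ ψ₂) := br_skew _ _
  rw [hDDα]
  simp only [hDα, anchor_br, h1, h2, h3, Derivation.commutator_apply,
    map_sub, map_add, map_neg]
  ring
end

section
/- Let (R, E, [.,.], ρ, H) be an H-twisted Lie–Rinehart algebra and Ψ : E → ker ρ an R-linear map (a ker ρ-valued E-1-form). Then the square of the exterior covariant derivative is given by the curvature and Jacobiator insertions of H: for all ψ₀,ψ₁,ψ₂ ∈ E, D(DΨ)(ψ₀,ψ₁,ψ₂) = H(Ψ(ψ₀),ψ₁,ψ₂) − H(Ψ(ψ₁),ψ₀,ψ₂) + H(Ψ(ψ₂),ψ₀,ψ₁) − Ψ(H(ψ₀,ψ₁,ψ₂)). -/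
/-- For an `H`-twisted Lie–Rinehart algebra and a `ker ρ`-valued `E`-1-form
`Ψ`, the square of the exterior covariant derivative is given by the curvature and
Jacobiator insertions of `H`:
`D(DΨ)(ψ₀,ψ₁,ψ₂) = H(Ψψ₀,ψ₁,ψ₂) − H(Ψψ₁,ψ₀,ψ₂) + H(Ψψ₂,ψ₀,ψ₁) − Ψ(H(ψ₀,ψ₁,ψ₂))`. -/
theorem extCovDer_squared_of_one_form
    {k R E : Type*} [Field k] [CommRing R] [Algebra k R]
    [AddCommGroup E] [Module k E] [Module R E] [IsScalarTower k R E]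
    (ρ : E →ₗ[R] Derivation k R R)
    (br : E → E → E)
    (br_add_left : ∀ φ₁ φ₂ ψ : E, br (φ₁ + φ₂) ψ = br φ₁ ψ + br φ₂ ψ)
    (br_smul_left : ∀ (a : k) (φ ψ : E), br (a • φ) ψ = a • br φ ψ)
    (br_skew : ∀ φ ψ : E, br φ ψ = - br ψ φ)
    (H : E →ₗ[R] E →ₗ[R] E →ₗ[R] E)
    (H_alt₁₂ : ∀ φ ψ : E, H φ φ ψ = 0)
    (H_alt₂₃ : ∀ φ ψ : E, H φ ψ ψ = 0)
    (H_ker : ∀ φ ψ χ : E, ρ (H φ ψ χ) = 0)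
    (leibniz : ∀ (φ : E) (f : R) (ψ : E), br φ (f • ψ) = ρ φ f • ψ + f • br φ ψ)
    (jacobi : ∀ φ ψ₁ ψ₂ : E,
      br φ (br ψ₁ ψ₂) = br (br φ ψ₁) ψ₂ + br ψ₁ (br φ ψ₂) + H φ ψ₁ ψ₂)
    (anchor_br : ∀ φ ψ : E, ρ (br φ ψ) = ⁅ρ φ, ρ ψ⁆)
    -- a ker ρ-valued E-1-form Ψ (the connection on ker ρ is ∇_φψ = [φ,ψ] = br φ ψ)
    (Ψ : E →ₗ[R] E)
    (Ψ_ker : ∀ ψ : E, ρ (Ψ ψ) = 0)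
    -- its exterior covariant derivative DΨ
    (DΨ : E → E → E)
    (hDΨ : ∀ ψ₀ ψ₁ : E, DΨ ψ₀ ψ₁ = br ψ₀ (Ψ ψ₁) - br ψ₁ (Ψ ψ₀) - Ψ (br ψ₀ ψ₁))
    -- the second exterior covariant derivative D(DΨ)
    (DDΨ : E → E → E → E)
    (hDDΨ : ∀ ψ₀ ψ₁ ψ₂ : E, DDΨ ψ₀ ψ₁ ψ₂ =
      br ψ₀ (DΨ ψ₁ ψ₂) - br ψ₁ (DΨ ψ₀ ψ₂) + br ψ₂ (DΨ ψ₀ ψ₁)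
        - DΨ (br ψ₀ ψ₁) ψ₂ + DΨ (br ψ₀ ψ₂) ψ₁ - DΨ (br ψ₁ ψ₂) ψ₀) :
    ∀ ψ₀ ψ₁ ψ₂ : E, DDΨ ψ₀ ψ₁ ψ₂ =
      H (Ψ ψ₀) ψ₁ ψ₂ - H (Ψ ψ₁) ψ₀ ψ₂ + H (Ψ ψ₂) ψ₀ ψ₁ - Ψ (H ψ₀ ψ₁ ψ₂) := by
  -- additivity lemmas for br
  have br0l : ∀ ψ : E, br 0 ψ = 0 := by
    intro ψ
    have h : br 0 ψ + br 0 ψ = br 0 ψ := by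
      rw [← br_add_left]; norm_num
    exact add_eq_right.mp h
  have br_negl : ∀ a ψ : E, br (-a) ψ = - br a ψ := by
    intro a ψ
    have h : br a ψ + br (-a) ψ = 0 := by
      rw [← br_add_left]; simp [br0l]
    exact (neg_eq_of_add_eq_zero_right h).symm
  have br_subl : ∀ a b ψ : E, br (a - b) ψ = br a ψ - br b ψ := by
    intro a b ψ
    rw [sub_eq_add_neg, br_add_left, br_negl, sub_eq_add_neg]
  have br_negr : ∀ φ a : E, br φ (-a) = - br φ a := by
    intro φ a
    rw [br_skew φ (-a), br_negl, br_skew a φ, neg_neg]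
  have br_addr : ∀ φ a b : E, br φ (a + b) = br φ a + br φ b := by
    intro φ a b
    rw [br_skew φ (a + b), br_add_left, br_skew a φ, br_skew b φ]
    abel
  have br_subr : ∀ φ a b : E, br φ (a - b) = br φ a - br φ b := by
    intro φ a b
    rw [sub_eq_add_neg, br_addr, br_negr, sub_eq_add_neg]
  -- H antisymmetry
  have Hsw12 : ∀ a b c : E, H a b c = - H b a c := by
    intro a b c
    have h := H_alt₁₂ (a + b) c
    simp only [map_add, LinearMap.add_apply, H_alt₁₂, zero_add, add_zero] at h
    exact eq_neg_of_add_eq_zero_right h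
  have Hsw23 : ∀ a b c : E, H a b c = - H a c b := by
    intro a b c
    have h := H_alt₂₃ a (b + c)
    simp only [map_add, LinearMap.add_apply, H_alt₂₃, zero_add, add_zero] at h
    exact eq_neg_of_add_eq_zero_right h
  have Hrot : ∀ a b c : E, H a b c = H c a b := by
    intro a b c
    rw [Hsw23, Hsw12, neg_neg]
  -- jacobi rearranged
  have brbr : ∀ a b c : E, br (br a b) c =
      br a (br b c) - br b (br a c) - H a b c := by
    intro a b c
    have h := jacobi a b c
    rw [h]; abel
  intro ψ₀ ψ₁ ψ₂
  have key : br ψ₂ (br ψ₀ ψ₁) =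
      -(br ψ₀ (br ψ₁ ψ₂) - br ψ₁ (br ψ₀ ψ₂) - H ψ₀ ψ₁ ψ₂) := by
    rw [br_skew ψ₂ (br ψ₀ ψ₁), brbr]
  rw [hDDΨ]
  simp only [hDΨ, br_subr, br_addr, br_subl, br_add_left, brbr, map_sub, map_add]
  rw [Hrot ψ₁ ψ₂ (Ψ ψ₀), Hrot ψ₀ ψ₂ (Ψ ψ₁), Hrot ψ₀ ψ₁ (Ψ ψ₂)]
  rw [br_skew ψ₂ ψ₁, br_skew ψ₂ ψ₀, br_skew ψ₁ ψ₀]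
  simp only [br_negr, map_neg, neg_neg]
  rw [Hsw23 ψ₀ ψ₂ ψ₁, Hrot ψ₁ ψ₂ ψ₀]
  rw [key]
  simp only [map_neg, map_sub, neg_sub, neg_neg]
  abel
end

section
/- Let (R, E, [.,.], ρ, H) be an H-twisted Lie–Rinehart algebra and let α be an alternating R-multilinear p-form on E with values in R (p ≥ 0) that is annihilated by insertion of H, i.e. α(H(ψ,χ,ω), φ₂,…,φ_p) = 0 for all ψ,χ,ω,φ₂,…,φ_p ∈ E (this condition is vacuous for p = 0). Then D(Dα) = 0, where D is the Chevalley–Eilenberg-type differential defined by ρ and [.,.]. In particular the naive differential squares to zero on the naive cochains of scalar type. -/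
section
variable {k R E : Type*} [Field k] [CommRing R] [Algebra k R]
  [AddCommGroup E] [Module k E] [Module R E] [IsScalarTower k R E]

/-- The Chevalley–Eilenberg-type differential on scalar-valued alternating `p`-forms on `E`,
defined by the anchor `ρ` and the bracket:
`Dω(ψ₀,…,ψ_p) = Σᵢ (−1)ⁱ ρ(ψᵢ)(ω(…,ψ̂ᵢ,…)) + Σ_{i<j} (−1)^{i+j} ω([ψᵢ,ψⱼ],…,ψ̂ᵢ,…,ψ̂ⱼ,…)`. -/
noncomputable def ceDiff (ρ : E →ₗ[R] Derivation k R R) (br : E → E → E) :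
    (p : ℕ) → ((Fin p → E) → R) → (Fin (p + 1) → E) → R
  | 0, ω, ψ => ∑ i : Fin 1, ((-1 : ℤ) ^ (i : ℕ)) • (ρ (ψ i)) (ω (i.removeNth ψ))
  | (q + 1), ω, ψ =>
      (∑ i : Fin (q + 2), ((-1 : ℤ) ^ (i : ℕ)) • (ρ (ψ i)) (ω (i.removeNth ψ)))
      + ∑ i : Fin (q + 2), ∑ j : Fin (q + 2),
          if h : i < j then
            ((-1 : ℤ) ^ ((i : ℕ) + (j : ℕ))) •
              ω (Fin.cons (br (ψ i) (ψ j))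
                (fun l : Fin q =>
                  ψ (j.succAbove
                    ((⟨(i : ℕ), lt_of_lt_of_le (Fin.lt_def.mp h)
                        (Nat.lt_succ_iff.mp j.isLt)⟩ : Fin (q + 1)).succAbove l))))
          else 0

end


set_option linter.unusedSectionVars false
set_option linter.unusedVariables false

section CeAux
variable {k R E : Type*} [Field k] [CommRing R] [Algebra k R]
  [AddCommGroup E] [Module k E] [Module R E] [IsScalarTower k R E]

/-! ### Tuple plumbing -/

theorem ceAux_removeNth_succ_cons {n : ℕ} (i : Fin (n + 1)) (x : E) (p : Fin (n + 1) → E) :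
    (Fin.succ i).removeNth (Fin.cons x p : Fin (n + 2) → E) = Fin.cons x (i.removeNth p) := by
  funext l
  refine Fin.cases ?_ (fun l' => ?_) l
  · simp [Fin.removeNth, Fin.succ_succAbove_zero]
  · simp [Fin.removeNth, Fin.succ_succAbove_succ]

theorem ceAux_removeNth_succ {n : ℕ} (j : Fin (n + 1)) (χ : Fin (n + 2) → E) :
    (Fin.succ j).removeNth χ = (Fin.cons (χ 0) (j.removeNth (Fin.tail χ)) : Fin (n + 1) → E) := by
  conv_lhs => rw [← Fin.cons_self_tail χ]
  rw [ceAux_removeNth_succ_cons]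

theorem ceAux_update_zero_cons {n : ℕ} (χ : Fin (n + 1) → E) (β : E) :
    Function.update χ 0 β = Fin.cons β (Fin.tail χ) := by
  funext l
  refine Fin.cases ?_ (fun l' => ?_) l
  · simp
  · simp [Function.update_of_ne (Fin.succ_ne_zero l'), Fin.tail]

end CeAux

section CeAux2
variable {k R E : Type*} [Field k] [CommRing R] [Algebra k R]
  [AddCommGroup E] [Module k E] [Module R E] [IsScalarTower k R E]

/-- Interior product (insertion at slot 0). -/
def ceAux_iota {n : ℕ} (X : E) (η : (Fin (n + 1) → E) → R) : (Fin n → E) → R :=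
  fun χ => η (Fin.cons X χ)

/-- Lie derivative along `X`. -/
noncomputable def ceAux_lie (ρ : E →ₗ[R] Derivation k R R) (br : E → E → E) {n : ℕ}
    (X : E) (η : (Fin n → E) → R) : (Fin n → E) → R :=
  fun χ => ρ X (η χ) - ∑ j : Fin n, η (Function.update χ j (br X (χ j)))

variable (ρ : E →ₗ[R] Derivation k R R) (br : E → E → E)

/-! ### facts about additive alternating forms -/

theorem ceAux_cons_add {n : ℕ} (η : (Fin (n + 1) → E) → R)
    (hAdd : ∀ (v : Fin (n + 1) → E) (i : Fin (n + 1)) (x y : E),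
      η (Function.update v i (x + y)) = η (Function.update v i x) + η (Function.update v i y))
    (x y : E) (w : Fin n → E) :
    η (Fin.cons (x + y) w) = η (Fin.cons x w) + η (Fin.cons y w) := by
  have h := hAdd (Fin.cons x w) 0 x y
  simpa [Fin.update_cons_zero] using h

theorem ceAux_cons_zero {n : ℕ} (η : (Fin (n + 1) → E) → R)
    (hAdd : ∀ (v : Fin (n + 1) → E) (i : Fin (n + 1)) (x y : E),
      η (Function.update v i (x + y)) = η (Function.update v i x) + η (Function.update v i y))
    (w : Fin n → E) : η (Fin.cons 0 w) = 0 := by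
  have h := ceAux_cons_add η hAdd 0 0 w
  simp only [add_zero] at h
  exact (left_eq_add.mp h)

theorem ceAux_cons_neg {n : ℕ} (η : (Fin (n + 1) → E) → R)
    (hAdd : ∀ (v : Fin (n + 1) → E) (i : Fin (n + 1)) (x y : E),
      η (Function.update v i (x + y)) = η (Function.update v i x) + η (Function.update v i y))
    (x : E) (w : Fin n → E) : η (Fin.cons (-x) w) = - η (Fin.cons x w) := by
  have h := ceAux_cons_add η hAdd (-x) x w
  rw [neg_add_cancel, ceAux_cons_zero η hAdd] at h
  exact eq_neg_of_add_eq_zero_left h.symm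

theorem ceAux_swap_update {n : ℕ} (η : (Fin n → E) → R)
    (hAlt : ∀ (v : Fin n → E) (i j : Fin n), i ≠ j → v i = v j → η v = 0)
    (hAdd : ∀ (v : Fin n → E) (i : Fin n) (x y : E),
      η (Function.update v i (x + y)) = η (Function.update v i x) + η (Function.update v i y))
    (v : Fin n → E) (i j : Fin n) (hij : i ≠ j) (x y : E) :
    η (Function.update (Function.update v i x) j y)
      = - η (Function.update (Function.update v i y) j x) := by
  have hval : ∀ a b : E,
      (Function.update (Function.update v i a) j b) i = a := by
    intro a b
    rw [Function.update_of_ne hij, Function.update_self]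
  have hdiag : ∀ a : E, η (Function.update (Function.update v i a) j a) = 0 := by
    intro a
    exact hAlt _ i j hij (by rw [hval, Function.update_self])
  have key : ∀ c : E, η (Function.update (Function.update v i (x + y)) j c)
      = η (Function.update (Function.update v i x) j c)
        + η (Function.update (Function.update v i y) j c) := by
    intro c
    rw [Function.update_comm hij, hAdd, Function.update_comm hij.symm,
      Function.update_comm hij.symm]
  have h0 : η (Function.update (Function.update v i (x + y)) j (x + y)) = 0 :=
    hdiag _
  rw [hAdd, key x, key y, hdiag x, hdiag y] at h0
  linear_combination h0

end CeAux2

section CeAux3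
variable {k R E : Type*} [Field k] [CommRing R] [Algebra k R]
  [AddCommGroup E] [Module k E] [Module R E] [IsScalarTower k R E]
variable (ρ : E →ₗ[R] Derivation k R R) (br : E → E → E)

theorem ceAux_cons_swap {m : ℕ} (η : (Fin (m + 2) → E) → R)
    (hAlt : ∀ (v : Fin (m + 2) → E) (i j : Fin (m + 2)), i ≠ j → v i = v j → η v = 0)
    (hAdd : ∀ (v : Fin (m + 2) → E) (i : Fin (m + 2)) (x y : E),
      η (Function.update v i (x + y)) = η (Function.update v i x) + η (Function.update v i y))
    (a b : E) (w : Fin m → E) :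
    η (Fin.cons a (Fin.cons b w)) = - η (Fin.cons b (Fin.cons a w)) := by
  have h01 : (0 : Fin (m + 2)) ≠ 1 := by
    simp [Fin.ext_iff]
  have e1 : ∀ c d : E, Function.update (Function.update
      (Fin.cons b (Fin.cons a w) : Fin (m + 2) → E) 0 c) 1 d = Fin.cons c (Fin.cons d w) := by
    intro c d
    rw [Fin.update_cons_zero]
    rw [show (1 : Fin (m + 2)) = Fin.succ 0 from rfl, ← Fin.cons_update, Fin.update_cons_zero]
  have h := ceAux_swap_update η hAlt hAdd (Fin.cons b (Fin.cons a w)) 0 1 h01 a b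
  rw [e1 a b, e1 b a] at h
  exact h

theorem ceAux_iota_alt {n : ℕ} (X : E) (η : (Fin (n + 1) → E) → R)
    (hAlt : ∀ (v : Fin (n + 1) → E) (i j : Fin (n + 1)), i ≠ j → v i = v j → η v = 0) :
    ∀ (v : Fin n → E) (i j : Fin n), i ≠ j → v i = v j → ceAux_iota X η v = 0 := by
  intro v i j hij hv
  exact hAlt (Fin.cons X v) i.succ j.succ
    (fun h => hij (Fin.succ_injective _ h)) (by simpa using hv)

theorem ceAux_iota_add {n : ℕ} (X : E) (η : (Fin (n + 1) → E) → R)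
    (hAdd : ∀ (v : Fin (n + 1) → E) (i : Fin (n + 1)) (x y : E),
      η (Function.update v i (x + y)) = η (Function.update v i x) + η (Function.update v i y)) :
    ∀ (v : Fin n → E) (i : Fin n) (x y : E),
      ceAux_iota X η (Function.update v i (x + y))
        = ceAux_iota X η (Function.update v i x) + ceAux_iota X η (Function.update v i y) := by
  intro v i x y
  unfold ceAux_iota
  rw [Fin.cons_update, Fin.cons_update, Fin.cons_update]
  exact hAdd (Fin.cons X v) i.succ x y

theorem ceAux_iota_prop {n : ℕ} (X : E) (η : (Fin (n + 1) → E) → R) (P : E → Prop)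
    (hP : ∀ (v : Fin (n + 1) → E) (i : Fin (n + 1)) (z : E), P z →
      η (Function.update v i z) = 0) :
    ∀ (v : Fin n → E) (i : Fin n) (z : E), P z → ceAux_iota X η (Function.update v i z) = 0 := by
  intro v i z hz
  unfold ceAux_iota
  rw [Fin.cons_update]
  exact hP (Fin.cons X v) i.succ z hz

theorem ceAux_lie_alt {n : ℕ} (X : E) (η : (Fin n → E) → R)
    (hAlt : ∀ (v : Fin n → E) (i j : Fin n), i ≠ j → v i = v j → η v = 0)
    (hAdd : ∀ (v : Fin n → E) (i : Fin n) (x y : E),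
      η (Function.update v i (x + y)) = η (Function.update v i x) + η (Function.update v i y)) :
    ∀ (v : Fin n → E) (i j : Fin n), i ≠ j → v i = v j → ceAux_lie ρ br X η v = 0 := by
  intro v i j hij hv
  unfold ceAux_lie
  rw [hAlt v i j hij hv, map_zero, zero_sub, neg_eq_zero]
  have hsum : ∑ l : Fin n, η (Function.update v l (br X (v l)))
      = η (Function.update v i (br X (v i))) + η (Function.update v j (br X (v j))) := by
    rw [← Finset.add_sum_erase _ _ (Finset.mem_univ i)]
    congr 1
    rw [← Finset.add_sum_erase _ _ (Finset.mem_erase.mpr ⟨hij.symm, Finset.mem_univ j⟩)]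
    rw [Finset.sum_eq_zero, add_zero]
    intro l hl
    simp only [Finset.mem_erase] at hl
    refine hAlt _ i j hij ?_
    rw [Function.update_of_ne (fun h => hl.2.1 h.symm) _ v,
      Function.update_of_ne (fun h => hl.1 h.symm) _ v]
    exact hv
  rw [hsum]
  -- the two remaining terms cancel by the swap property
  have hb : br X (v j) = br X (v i) := by rw [hv]
  have h1 : η (Function.update v i (br X (v i)))
      = - η (Function.update v j (br X (v i))) := by
    have e1 : Function.update v i (br X (v i))
        = Function.update (Function.update v i (br X (v i))) j (v j) := by
      have hval : (Function.update v i (br X (v i))) j = v j :=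
        Function.update_of_ne hij.symm _ v
      rw [← hval, Function.update_eq_self]
    have e2 : Function.update (Function.update v i (v j)) j (br X (v i))
        = Function.update v j (br X (v i)) := by
      rw [← hv, Function.update_eq_self]
    rw [e1, ceAux_swap_update η hAlt hAdd v i j hij, e2]
  rw [h1, hb]
  ring

end CeAux3

section CeAux4
variable {k R E : Type*} [Field k] [CommRing R] [Algebra k R]
  [AddCommGroup E] [Module k E] [Module R E] [IsScalarTower k R E]
variable (ρ : E →ₗ[R] Derivation k R R) (br : E → E → E)

theorem ceAux_lie_add {n : ℕ} (X : E) (η : (Fin n → E) → R)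
    (hbr : ∀ (a x y : E), br a (x + y) = br a x + br a y)
    (hAdd : ∀ (v : Fin n → E) (i : Fin n) (x y : E),
      η (Function.update v i (x + y)) = η (Function.update v i x) + η (Function.update v i y)) :
    ∀ (v : Fin n → E) (i : Fin n) (x y : E),
      ceAux_lie ρ br X η (Function.update v i (x + y))
        = ceAux_lie ρ br X η (Function.update v i x)
          + ceAux_lie ρ br X η (Function.update v i y) := by
  intro v i x y
  unfold ceAux_lie
  have hterm : ∀ l : Fin n,
      η (Function.update (Function.update v i (x + y)) l
          (br X ((Function.update v i (x + y)) l)))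
        = η (Function.update (Function.update v i x) l
            (br X ((Function.update v i x) l)))
          + η (Function.update (Function.update v i y) l
              (br X ((Function.update v i y) l))) := by
    intro l
    by_cases hl : l = i
    · subst hl
      rw [Function.update_self, Function.update_self, Function.update_self,
        Function.update_idem, Function.update_idem, Function.update_idem, hbr, hAdd]
    · have hne : l ≠ i := hl
      rw [Function.update_of_ne hne, Function.update_of_ne hne, Function.update_of_ne hne]
      rw [Function.update_comm hne.symm, Function.update_comm hne.symm (a := i),
        Function.update_comm hne.symm (a := i), hAdd]
  rw [hAdd, Finset.sum_congr rfl (fun l _ => hterm l), Finset.sum_add_distrib, map_add]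
  ring

theorem ceAux_iota_lie {n : ℕ} (X Y : E) (η : (Fin (n + 1) → E) → R) (r : Fin n → E) :
    ceAux_lie ρ br X η (Fin.cons Y r)
      = ceAux_lie ρ br X (ceAux_iota Y η) r - ceAux_iota (br X Y) η r := by
  unfold ceAux_lie ceAux_iota
  rw [Fin.sum_univ_succ]
  rw [Fin.cons_zero, Fin.update_cons_zero]
  have hterm : ∀ j : Fin n,
      η (Function.update (Fin.cons Y r) j.succ (br X ((Fin.cons Y r : Fin (n+1) → E) j.succ)))
        = η (Fin.cons Y (Function.update r j (br X (r j)))) := by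
    intro j
    rw [Fin.cons_succ, Fin.cons_update]
  rw [Finset.sum_congr rfl (fun j _ => hterm j)]
  ring

theorem ceAux_lie_sub {n : ℕ} (X : E) (η₁ η₂ : (Fin n → E) → R) (χ : Fin n → E) :
    ceAux_lie ρ br X (fun v => η₁ v - η₂ v) χ
      = ceAux_lie ρ br X η₁ χ - ceAux_lie ρ br X η₂ χ := by
  unfold ceAux_lie
  rw [map_sub, Finset.sum_sub_distrib]
  ring

end CeAux4

section CeAux5
variable {k R E : Type*} [Field k] [CommRing R] [Algebra k R]
  [AddCommGroup E] [Module k E] [Module R E] [IsScalarTower k R E]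
variable (ρ : E →ₗ[R] Derivation k R R) (br : E → E → E)

theorem ceAux_nice_move : ∀ (n : ℕ) (η : (Fin (n + 1) → E) → R)
    (hAlt : ∀ (v : Fin (n + 1) → E) (i j : Fin (n + 1)), i ≠ j → v i = v j → η v = 0)
    (hAdd : ∀ (v : Fin (n + 1) → E) (i : Fin (n + 1)) (x y : E),
      η (Function.update v i (x + y)) = η (Function.update v i x) + η (Function.update v i y))
    (χ : Fin (n + 1) → E) (j : Fin (n + 1)) (β : E),
    η (Function.update χ j β) = ((-1 : ℤ) ^ (j : ℕ)) • η (Fin.cons β (j.removeNth χ)) := by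
  intro n
  induction n with
  | zero =>
    intro η hAlt hAdd χ j β
    have hj : j = 0 := Fin.ext (by omega)
    subst hj
    rw [ceAux_update_zero_cons, Fin.removeNth_zero]
    simp
  | succ d ih =>
    intro η hAlt hAdd χ j β
    refine Fin.cases ?_ (fun j' => ?_) j
    · rw [ceAux_update_zero_cons, Fin.removeNth_zero]
      simp
    · conv_lhs => rw [← Fin.cons_self_tail χ, ← Fin.cons_update]
      have hiota : η (Fin.cons (χ 0) (Function.update (Fin.tail χ) j' β))
          = ceAux_iota (χ 0) η (Function.update (Fin.tail χ) j' β) := rfl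
      rw [hiota, ih (ceAux_iota (χ 0) η) (ceAux_iota_alt (χ 0) η hAlt)
        (ceAux_iota_add (χ 0) η hAdd) (Fin.tail χ) j' β]
      unfold ceAux_iota
      rw [ceAux_cons_swap η hAlt hAdd, ceAux_removeNth_succ]
      rw [Fin.val_succ, pow_succ, mul_neg_one, neg_smul, smul_neg]

end CeAux5



section CeAux6
variable {k R E : Type*} [Field k] [CommRing R] [Algebra k R]
  [AddCommGroup E] [Module k E] [Module R E] [IsScalarTower k R E]
variable (ρ : E →ₗ[R] Derivation k R R) (br : E → E → E)

theorem ceAux_dite_sub (P : Prop) [Decidable P] (f g : P → R) :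
    (if h : P then f h - g h else 0) = (if h : P then f h else 0) - (if h : P then g h else 0) := by
  split <;> simp

theorem ceAux_dite_neg (P : Prop) [Decidable P] (f : P → R) :
    (if h : P then - f h else 0) = - (if h : P then f h else 0) := by
  split <;> simp

theorem ceAux_ceDiff_sub (n : ℕ) (η₁ η₂ : (Fin n → E) → R) (ψ : Fin (n + 1) → E) :
    ceDiff ρ br n (fun v => η₁ v - η₂ v) ψ = ceDiff ρ br n η₁ ψ - ceDiff ρ br n η₂ ψ := by
  cases n with
  | zero =>
    simp only [ceDiff, map_sub, smul_sub, Finset.sum_sub_distrib]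
  | succ q =>
    simp only [ceDiff, map_sub, smul_sub, ceAux_dite_sub, Finset.sum_sub_distrib]
    ring

theorem ceAux_ceDiff_neg (n : ℕ) (η : (Fin n → E) → R) (ψ : Fin (n + 1) → E) :
    ceDiff ρ br n (fun v => - η v) ψ = - ceDiff ρ br n η ψ := by
  cases n with
  | zero =>
    simp only [ceDiff, map_neg, smul_neg, Finset.sum_neg_distrib]
  | succ q =>
    simp only [ceDiff, map_neg, smul_neg, ceAux_dite_neg, Finset.sum_neg_distrib]
    ring

end CeAux6



section CeAux7
variable {k R E : Type*} [Field k] [CommRing R] [Algebra k R]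
  [AddCommGroup E] [Module k E] [Module R E] [IsScalarTower k R E]
variable (ρ : E →ₗ[R] Derivation k R R) (br : E → E → E)

theorem ceAux_fin0_eq (a b : Fin 0 → E) : a = b := funext fun x => x.elim0

theorem ceAux_masterZero (η : (Fin 1 → E) → R) (X : E) (χ : Fin 1 → E) :
    ceDiff ρ br 1 η (Fin.cons X χ) = ceAux_lie ρ br X η χ - ceDiff ρ br 0 (ceAux_iota X η) χ := by
  simp only [ceDiff, ceAux_lie, ceAux_iota, Fin.sum_univ_succ, Fin.sum_univ_zero]
  rw [dif_neg (lt_irrefl _), dif_pos (Fin.succ_pos (0 : Fin 1)),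
    dif_neg (Fin.not_lt_zero _), dif_neg (lt_irrefl _)]
  rw [Fin.cons_succ, Fin.cons_zero, Fin.removeNth_zero, Fin.tail_cons,
    ceAux_removeNth_succ_cons, ceAux_update_zero_cons]
  have h1 : (fun l : Fin 0 => (Fin.cons X χ : Fin (0 + 2) → E) ((Fin.succ 0).succAbove
      ((⟨(((0 : Fin (0 + 2))) : ℕ), by simp⟩ : Fin (0 + 1)).succAbove l))) = Fin.tail χ :=
    ceAux_fin0_eq _ _
  rw [h1]
  simp only [Fin.val_zero, Fin.val_succ, pow_zero, pow_succ, one_smul, one_mul,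
    mul_neg_one, neg_smul, add_zero, zero_add]
  ring

end CeAux7



section CeAux8
variable {k R E : Type*} [Field k] [CommRing R] [Algebra k R]
  [AddCommGroup E] [Module k E] [Module R E] [IsScalarTower k R E]
variable (ρ : E →ₗ[R] Derivation k R R) (br : E → E → E)

theorem ceAux_masterSucc {m : ℕ} (η : (Fin (m + 2) → E) → R)
    (hswap : ∀ (a b : E) (w : Fin m → E),
      η (Fin.cons a (Fin.cons b w)) = - η (Fin.cons b (Fin.cons a w)))
    (hmove : ∀ (χ : Fin (m + 2) → E) (j : Fin (m + 2)) (β : E),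
      η (Function.update χ j β) = ((-1 : ℤ) ^ (j : ℕ)) • η (Fin.cons β (j.removeNth χ)))
    (X : E) (χ : Fin (m + 2) → E) :
    ceDiff ρ br (m + 2) η (Fin.cons X χ)
      = ceAux_lie ρ br X η χ - ceDiff ρ br (m + 1) (ceAux_iota X η) χ := by
  have hA : (∑ i : Fin (m + 1 + 2), ((-1 : ℤ) ^ (i : ℕ)) •
        (ρ ((Fin.cons X χ : Fin (m + 1 + 2) → E) i)) (η (i.removeNth (Fin.cons X χ : Fin (m + 1 + 2) → E))))
      = (ρ X) (η χ)
        - ∑ i : Fin (m + 2), ((-1 : ℤ) ^ (i : ℕ)) •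
            (ρ (χ i)) (η (Fin.cons X (i.removeNth χ))) := by
    rw [Fin.sum_univ_succ]
    simp only [Fin.val_zero, pow_zero, one_smul, Fin.cons_zero, Fin.removeNth_zero,
      Fin.tail_cons, Fin.cons_succ, Fin.val_succ, pow_succ, mul_neg_one, neg_smul,
      ceAux_removeNth_succ_cons, Finset.sum_neg_distrib]
    ring
  have hrow0 : (∑ j : Fin (m + 1 + 2),
        if h : (0 : Fin (m + 1 + 2)) < j then
          ((-1 : ℤ) ^ (((0 : Fin (m + 1 + 2)) : ℕ) + (j : ℕ))) •
            η (Fin.cons (br ((Fin.cons X χ : Fin (m + 1 + 2) → E) 0) ((Fin.cons X χ : Fin (m + 1 + 2) → E) j))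
              (fun l : Fin (m + 1) =>
                (Fin.cons X χ : Fin (m + 1 + 2) → E) (j.succAbove
                  ((⟨((0 : Fin (m + 1 + 2)) : ℕ), lt_of_lt_of_le (Fin.lt_def.mp h)
                      (Nat.lt_succ_iff.mp j.isLt)⟩ : Fin (m + 1 + 1)).succAbove l))))
        else 0)
      = - ∑ j : Fin (m + 2), η (Function.update χ j (br X (χ j))) := by
    rw [Fin.sum_univ_succ, dif_neg (lt_irrefl _), zero_add, ← Finset.sum_neg_distrib]
    refine Finset.sum_congr rfl fun j' _ => ?_
    rw [dif_pos (Fin.succ_pos j')]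
    have htup : (fun l : Fin (m + 1) =>
          (Fin.cons X χ : Fin (m + 1 + 2) → E) ((Fin.succ j').succAbove
            ((⟨((0 : Fin (m + 1 + 2)) : ℕ), lt_of_lt_of_le
                (Fin.lt_def.mp (Fin.succ_pos j')) (Nat.lt_succ_iff.mp (Fin.succ j').isLt)⟩ :
                Fin (m + 1 + 1)).succAbove l)))
        = j'.removeNth χ := by
      funext l
      have hmk : (⟨((0 : Fin (m + 1 + 2)) : ℕ), lt_of_lt_of_le
            (Fin.lt_def.mp (Fin.succ_pos j')) (Nat.lt_succ_iff.mp (Fin.succ j').isLt)⟩ :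
            Fin (m + 1 + 1)) = 0 := by
        ext; simp
      rw [hmk, Fin.zero_succAbove, Fin.succ_succAbove_succ, Fin.cons_succ]
      rfl
    rw [htup, hmove χ j' (br X (χ j')), Fin.cons_zero, Fin.cons_succ]
    rw [Fin.val_zero, Fin.val_succ, zero_add, pow_succ, mul_neg_one, neg_smul]
  have hrows : (∑ i' : Fin (m + 2), ∑ j : Fin (m + 1 + 2),
        if h : (Fin.succ i') < j then
          ((-1 : ℤ) ^ (((Fin.succ i') : ℕ) + (j : ℕ))) •
            η (Fin.cons (br ((Fin.cons X χ : Fin (m + 1 + 2) → E) (Fin.succ i'))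
                ((Fin.cons X χ : Fin (m + 1 + 2) → E) j))
              (fun l : Fin (m + 1) =>
                (Fin.cons X χ : Fin (m + 1 + 2) → E) (j.succAbove
                  ((⟨((Fin.succ i' : Fin (m + 1 + 2)) : ℕ), lt_of_lt_of_le (Fin.lt_def.mp h)
                      (Nat.lt_succ_iff.mp j.isLt)⟩ : Fin (m + 1 + 1)).succAbove l))))
        else 0)
      = - ∑ i : Fin (m + 2), ∑ j : Fin (m + 2),
          (if h : i < j then
            ((-1 : ℤ) ^ ((i : ℕ) + (j : ℕ))) •
              η (Fin.cons X (Fin.cons (br (χ i) (χ j))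
                (fun l : Fin m =>
                  χ (j.succAbove
                    ((⟨(i : ℕ), lt_of_lt_of_le (Fin.lt_def.mp h)
                        (Nat.lt_succ_iff.mp j.isLt)⟩ : Fin (m + 1)).succAbove l)))))
          else 0) := by
    rw [← Finset.sum_neg_distrib]
    refine Finset.sum_congr rfl fun i' _ => ?_
    rw [Fin.sum_univ_succ, dif_neg (Fin.not_lt_zero _), zero_add, ← Finset.sum_neg_distrib]
    refine Finset.sum_congr rfl fun j' _ => ?_
    by_cases hij : i' < j'
    · have hij' : Fin.succ i' < Fin.succ j' := by
        rw [Fin.succ_lt_succ_iff]; exact hij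
      rw [dif_pos hij', dif_pos hij]
      have hpf : (i' : ℕ) < m + 1 :=
        lt_of_lt_of_le (Fin.lt_def.mp hij) (Nat.lt_succ_iff.mp j'.isLt)
      have hmk : (⟨((Fin.succ i' : Fin (m + 1 + 2)) : ℕ), lt_of_lt_of_le
            (Fin.lt_def.mp hij') (Nat.lt_succ_iff.mp (Fin.succ j').isLt)⟩ :
            Fin (m + 1 + 1))
          = Fin.succ (⟨(i' : ℕ), hpf⟩ : Fin (m + 1)) := by
        ext; simp
      have htup : (fun l : Fin (m + 1) =>
            (Fin.cons X χ : Fin (m + 1 + 2) → E) ((Fin.succ j').succAbove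
              ((⟨((Fin.succ i' : Fin (m + 1 + 2)) : ℕ), lt_of_lt_of_le
                  (Fin.lt_def.mp hij') (Nat.lt_succ_iff.mp (Fin.succ j').isLt)⟩ :
                  Fin (m + 1 + 1)).succAbove l)))
          = (Fin.cons X (fun l : Fin m =>
              χ (j'.succAbove ((⟨(i' : ℕ), hpf⟩ : Fin (m + 1)).succAbove l))) :
              Fin (m + 1) → E) := by
        funext l
        refine Fin.cases ?_ (fun l'' => ?_) l
        · rw [hmk]
          simp only [Fin.succ_succAbove_zero, Fin.cons_zero]
        · rw [hmk]
          simp only [Fin.succ_succAbove_succ, Fin.cons_succ]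
      rw [htup, Fin.cons_succ, Fin.cons_succ]
      rw [hswap (br (χ i') (χ j')) X
        (fun l : Fin m => χ (j'.succAbove ((⟨(i' : ℕ), hpf⟩ : Fin (m + 1)).succAbove l)))]
      have hsign : ((-1 : ℤ) ^ (((Fin.succ i' : Fin (m + 1 + 2)) : ℕ)
            + ((Fin.succ j' : Fin (m + 1 + 2)) : ℕ)))
          = ((-1 : ℤ) ^ ((i' : ℕ) + (j' : ℕ))) := by
        rw [Fin.val_succ, Fin.val_succ,
          show (i' : ℕ) + 1 + ((j' : ℕ) + 1) = ((i' : ℕ) + (j' : ℕ)) + 2 by omega,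
          pow_add]
        norm_num
      rw [hsign, smul_neg]
    · have hij' : ¬ (Fin.succ i' < Fin.succ j') := by
        rw [Fin.succ_lt_succ_iff]; exact hij
      rw [dif_neg hij', dif_neg hij, neg_zero]
  simp only [ceDiff, ceAux_lie, ceAux_iota]
  rw [Fin.sum_univ_succ (f := fun i : Fin (m + 1 + 2) =>
    ∑ j : Fin (m + 1 + 2),
      if h : i < j then
        ((-1 : ℤ) ^ ((i : ℕ) + (j : ℕ))) •
          η (Fin.cons (br ((Fin.cons X χ : Fin (m + 1 + 2) → E) i) ((Fin.cons X χ : Fin (m + 1 + 2) → E) j))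
            (fun l : Fin (m + 1) =>
              (Fin.cons X χ : Fin (m + 1 + 2) → E) (j.succAbove
                ((⟨(i : ℕ), lt_of_lt_of_le (Fin.lt_def.mp h)
                    (Nat.lt_succ_iff.mp j.isLt)⟩ : Fin (m + 1 + 1)).succAbove l))))
      else 0)]
  rw [hA, hrow0, hrows]
  ring

end CeAux8



section CeAux9
variable {k R E : Type*} [Field k] [CommRing R] [Algebra k R]
  [AddCommGroup E] [Module k E] [Module R E] [IsScalarTower k R E]
variable (ρ : E →ₗ[R] Derivation k R R) (br : E → E → E)

theorem ceAux_master_nice {n : ℕ} (ω : (Fin (n + 1) → E) → R)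
    (hAlt : ∀ (v : Fin (n + 1) → E) (i j : Fin (n + 1)), i ≠ j → v i = v j → ω v = 0)
    (hAdd : ∀ (v : Fin (n + 1) → E) (i : Fin (n + 1)) (x y : E),
      ω (Function.update v i (x + y)) = ω (Function.update v i x) + ω (Function.update v i y))
    (X : E) (χ : Fin (n + 1) → E) :
    ceDiff ρ br (n + 1) ω (Fin.cons X χ)
      = ceAux_lie ρ br X ω χ - ceDiff ρ br n (ceAux_iota X ω) χ := by
  cases n with
  | zero => exact ceAux_masterZero ρ br ω X χ
  | succ m =>
    exact ceAux_masterSucc ρ br ω (ceAux_cons_swap ω hAlt hAdd)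
      (ceAux_nice_move (m + 1) ω hAlt hAdd) X χ

end CeAux9



section CeAux10
variable {k R E : Type*} [Field k] [CommRing R] [Algebra k R]
  [AddCommGroup E] [Module k E] [Module R E] [IsScalarTower k R E]
variable (ρ : E →ₗ[R] Derivation k R R) (br : E → E → E)

theorem ceAux_double_cancel {n : ℕ} (f g : Fin n → Fin n → R)
    (hoff : ∀ j l : Fin n, j ≠ l → f j l = g l j) :
    (∑ j : Fin n, ∑ l : Fin n, f j l) - (∑ j : Fin n, ∑ l : Fin n, g j l)
      = (∑ j : Fin n, f j j) - (∑ j : Fin n, g j j) := by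
  have h1 : (∑ j : Fin n, ∑ l : Fin n, g j l) = ∑ j : Fin n, ∑ l : Fin n, g l j :=
    Finset.sum_comm
  rw [h1, ← Finset.sum_sub_distrib, ← Finset.sum_sub_distrib]
  congr 1
  funext j
  rw [← Finset.sum_sub_distrib]
  refine Finset.sum_eq_single j (fun l _ hl => by rw [hoff j l (fun h => hl h.symm), sub_self])
    (fun h => absurd (Finset.mem_univ j) h)

theorem ceAux_lie_lie {n : ℕ} (H : E →ₗ[R] E →ₗ[R] E →ₗ[R] E)
    (jacobi : ∀ φ ψ₁ ψ₂ : E,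
      br φ (br ψ₁ ψ₂) = br (br φ ψ₁) ψ₂ + br ψ₁ (br φ ψ₂) + H φ ψ₁ ψ₂)
    (anchor_br : ∀ φ ψ : E, ρ (br φ ψ) = ⁅ρ φ, ρ ψ⁆)
    (ω : (Fin n → E) → R)
    (hAdd : ∀ (v : Fin n → E) (i : Fin n) (x y : E),
      ω (Function.update v i (x + y)) = ω (Function.update v i x) + ω (Function.update v i y))
    (hH : ∀ (x y z : E) (v : Fin n → E) (i : Fin n),
      ω (Function.update v i (H x y z)) = 0)
    (X Y : E) (χ : Fin n → E) :
    ceAux_lie ρ br X (ceAux_lie ρ br Y ω) χ - ceAux_lie ρ br Y (ceAux_lie ρ br X ω) χ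
      = ceAux_lie ρ br (br X Y) ω χ := by
  simp only [ceAux_lie]
  rw [map_sub, map_sub, map_sum, map_sum, Finset.sum_sub_distrib, Finset.sum_sub_distrib]
  have hdc := ceAux_double_cancel
    (fun j l => ω (Function.update (Function.update χ j (br X (χ j))) l
      (br Y ((Function.update χ j (br X (χ j))) l))))
    (fun j l => ω (Function.update (Function.update χ j (br Y (χ j))) l
      (br X ((Function.update χ j (br Y (χ j))) l))))
    (by
      intro j l hjl
      beta_reduce
      rw [Function.update_of_ne (fun h => hjl h.symm) _ χ,
        Function.update_of_ne hjl _ χ,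
        Function.update_comm hjl]
      )
  have hdiagf : ∀ j : Fin n,
      ω (Function.update (Function.update χ j (br X (χ j))) j
        (br Y ((Function.update χ j (br X (χ j))) j)))
      = ω (Function.update χ j (br Y (br X (χ j)))) := by
    intro j
    rw [Function.update_self, Function.update_idem]
  have hdiagg : ∀ j : Fin n,
      ω (Function.update (Function.update χ j (br Y (χ j))) j
        (br X ((Function.update χ j (br Y (χ j))) j)))
      = ω (Function.update χ j (br (br X Y) (χ j)))
        + ω (Function.update χ j (br Y (br X (χ j)))) := by
    intro j
    rw [Function.update_self, Function.update_idem, jacobi, hAdd, hAdd, hH, add_zero]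
  rw [Finset.sum_congr rfl (fun j _ => hdiagf j)] at hdc
  rw [Finset.sum_congr rfl (fun j _ => hdiagg j)] at hdc
  rw [Finset.sum_add_distrib] at hdc
  rw [anchor_br, Derivation.commutator_apply]
  linear_combination hdc

end CeAux10



section CeAux11
variable {k R E : Type*} [Field k] [CommRing R] [Algebra k R]
  [AddCommGroup E] [Module k E] [Module R E] [IsScalarTower k R E]
variable (ρ : E →ₗ[R] Derivation k R R) (br : E → E → E)

theorem ceAux_iota_H {n : ℕ} (H : E →ₗ[R] E →ₗ[R] E →ₗ[R] E) (X : E)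
    (ω : (Fin (n + 1) → E) → R)
    (hH : ∀ (x y z : E) (v : Fin (n + 1) → E) (i : Fin (n + 1)),
      ω (Function.update v i (H x y z)) = 0) :
    ∀ (x y z : E) (v : Fin n → E) (i : Fin n),
      ceAux_iota X ω (Function.update v i (H x y z)) = 0 := by
  intro x y z v i
  unfold ceAux_iota
  rw [Fin.cons_update]
  exact hH x y z _ _

theorem ceAux_lie_ceDiff (H : E →ₗ[R] E →ₗ[R] E →ₗ[R] E)
    (hbr : ∀ (a x y : E), br a (x + y) = br a x + br a y)
    (jacobi : ∀ φ ψ₁ ψ₂ : E,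
      br φ (br ψ₁ ψ₂) = br (br φ ψ₁) ψ₂ + br ψ₁ (br φ ψ₂) + H φ ψ₁ ψ₂)
    (anchor_br : ∀ φ ψ : E, ρ (br φ ψ) = ⁅ρ φ, ρ ψ⁆) :
    ∀ (n : ℕ) (ω : (Fin n → E) → R)
    (hAlt : ∀ (v : Fin n → E) (i j : Fin n), i ≠ j → v i = v j → ω v = 0)
    (hAdd : ∀ (v : Fin n → E) (i : Fin n) (x y : E),
      ω (Function.update v i (x + y)) = ω (Function.update v i x) + ω (Function.update v i y))
    (hH : ∀ (x y z : E) (v : Fin n → E) (i : Fin n),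
      ω (Function.update v i (H x y z)) = 0)
    (X : E) (ψ : Fin (n + 1) → E),
    ceAux_lie ρ br X (ceDiff ρ br n ω) ψ = ceDiff ρ br n (ceAux_lie ρ br X ω) ψ := by
  intro n
  induction n with
  | zero =>
    intro ω hAlt hAdd hH X ψ
    simp only [ceAux_lie, ceDiff, Fin.sum_univ_succ, Fin.sum_univ_zero, Finset.univ_eq_empty,
      Finset.sum_empty, add_zero, sub_zero, Fin.val_zero, pow_zero, one_smul,
      Function.update_self, Fin.removeNth_update]
    rw [anchor_br, Derivation.commutator_apply]
    ring
  | succ d ih =>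
    intro ω hAlt hAdd hH X ψ
    have key : ∀ (Y : E) (χ : Fin (d + 1) → E),
        ceAux_lie ρ br X (ceDiff ρ br (d + 1) ω) (Fin.cons Y χ)
          = ceDiff ρ br (d + 1) (ceAux_lie ρ br X ω) (Fin.cons Y χ) := by
      intro Y χ
      rw [ceAux_iota_lie ρ br X Y (ceDiff ρ br (d + 1) ω) χ]
      have h1 : ceAux_iota Y (ceDiff ρ br (d + 1) ω)
          = fun r => ceAux_lie ρ br Y ω r - ceDiff ρ br d (ceAux_iota Y ω) r :=
        funext fun r => ceAux_master_nice ρ br ω hAlt hAdd Y r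
      rw [h1, ceAux_lie_sub]
      have h2 : ceAux_iota (br X Y) (ceDiff ρ br (d + 1) ω) χ
          = ceAux_lie ρ br (br X Y) ω χ - ceDiff ρ br d (ceAux_iota (br X Y) ω) χ :=
        ceAux_master_nice ρ br ω hAlt hAdd (br X Y) χ
      rw [h2]
      rw [ceAux_master_nice ρ br (ceAux_lie ρ br X ω)
        (ceAux_lie_alt ρ br X ω hAlt hAdd) (ceAux_lie_add ρ br X ω hbr hAdd) Y χ]
      have h3 : ceAux_iota Y (ceAux_lie ρ br X ω)
          = fun r => ceAux_lie ρ br X (ceAux_iota Y ω) r - ceAux_iota (br X Y) ω r :=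
        funext fun r => ceAux_iota_lie ρ br X Y ω r
      rw [h3, ceAux_ceDiff_sub]
      have h4 := ih (ceAux_iota Y ω) (ceAux_iota_alt Y ω hAlt) (ceAux_iota_add Y ω hAdd)
        (ceAux_iota_H H Y ω hH) X χ
      have h5 := ceAux_lie_lie ρ br H jacobi anchor_br ω hAdd hH X Y χ
      linear_combination h5 - h4
    calc ceAux_lie ρ br X (ceDiff ρ br (d + 1) ω) ψ
        = ceAux_lie ρ br X (ceDiff ρ br (d + 1) ω) (Fin.cons (ψ 0) (Fin.tail ψ)) := by
          rw [Fin.cons_self_tail]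
      _ = ceDiff ρ br (d + 1) (ceAux_lie ρ br X ω) (Fin.cons (ψ 0) (Fin.tail ψ)) :=
          key (ψ 0) (Fin.tail ψ)
      _ = ceDiff ρ br (d + 1) (ceAux_lie ρ br X ω) ψ := by rw [Fin.cons_self_tail]

end CeAux11



section CeAux12
variable {k R E : Type*} [Field k] [CommRing R] [Algebra k R]
  [AddCommGroup E] [Module k E] [Module R E] [IsScalarTower k R E]
variable (ρ : E →ₗ[R] Derivation k R R) (br : E → E → E)

theorem ceAux_move1 (η : (Fin 1 → E) → R) (t : Fin 1 → E) (j : Fin 1) (β : E) :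
    η (Function.update t j β) = ((-1 : ℤ) ^ (j : ℕ)) • η (Fin.cons β (j.removeNth t)) := by
  have hj : j = 0 := Fin.ext (by omega)
  subst hj
  rw [ceAux_update_zero_cons, Fin.removeNth_zero]
  simp

theorem ceAux_ceDiff_swap (br_skew : ∀ φ ψ : E, br φ ψ = - br ψ φ) (p : ℕ)
    (ω : (Fin (p + 1) → E) → R)
    (hAlt : ∀ (v : Fin (p + 1) → E) (i j : Fin (p + 1)), i ≠ j → v i = v j → ω v = 0)
    (hAdd : ∀ (v : Fin (p + 1) → E) (i : Fin (p + 1)) (x y : E),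
      ω (Function.update v i (x + y)) = ω (Function.update v i x) + ω (Function.update v i y))
    (a b : E) (w : Fin p → E) :
    ceDiff ρ br (p + 1) ω (Fin.cons a (Fin.cons b w))
      = - ceDiff ρ br (p + 1) ω (Fin.cons b (Fin.cons a w)) := by
  cases p with
  | zero =>
    have key : ∀ (x y : E), ceDiff ρ br 1 ω (Fin.cons x (Fin.cons y w))
        = (ρ x) (ω (Fin.cons y w)) - ω (Fin.cons (br x y) w)
          - (ρ y) (ω (Fin.cons x w)) := by
      intro x y
      rw [ceAux_masterZero ρ br ω x (Fin.cons y w)]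
      simp only [ceAux_lie, ceAux_iota, ceDiff, Fin.sum_univ_succ, Fin.sum_univ_zero,
        add_zero, Fin.val_zero, pow_zero, one_smul, Fin.cons_zero, Fin.update_cons_zero,
        Fin.removeNth_zero, Fin.tail_cons]
    rw [key a b, key b a, br_skew b a, ceAux_cons_neg ω hAdd]
    ring
  | succ q =>
    have e1 : ceDiff ρ br (q + 2) ω (Fin.cons a (Fin.cons b w))
        = ceAux_lie ρ br a (ceAux_iota b ω) w - ceAux_iota (br a b) ω w
          - (ceAux_lie ρ br b (ceAux_iota a ω) w
            - ceDiff ρ br q (ceAux_iota b (ceAux_iota a ω)) w) := by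
      rw [ceAux_master_nice ρ br ω hAlt hAdd a (Fin.cons b w),
        ceAux_iota_lie ρ br a b ω w,
        ceAux_master_nice ρ br (ceAux_iota a ω) (ceAux_iota_alt a ω hAlt)
          (ceAux_iota_add a ω hAdd) b w]
    have e2 : ceDiff ρ br (q + 2) ω (Fin.cons b (Fin.cons a w))
        = ceAux_lie ρ br b (ceAux_iota a ω) w - ceAux_iota (br b a) ω w
          - (ceAux_lie ρ br a (ceAux_iota b ω) w
            - ceDiff ρ br q (ceAux_iota a (ceAux_iota b ω)) w) := by
      rw [ceAux_master_nice ρ br ω hAlt hAdd b (Fin.cons a w),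
        ceAux_iota_lie ρ br b a ω w,
        ceAux_master_nice ρ br (ceAux_iota b ω) (ceAux_iota_alt b ω hAlt)
          (ceAux_iota_add b ω hAdd) a w]
    have e3 : ceAux_iota (br b a) ω w = - ceAux_iota (br a b) ω w := by
      unfold ceAux_iota
      rw [br_skew b a]
      exact ceAux_cons_neg ω hAdd _ _
    have e4 : ceDiff ρ br q (ceAux_iota a (ceAux_iota b ω)) w
        = - ceDiff ρ br q (ceAux_iota b (ceAux_iota a ω)) w := by
      have h : ceAux_iota a (ceAux_iota b ω)
          = fun r => - ceAux_iota b (ceAux_iota a ω) r := by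
        funext r
        exact ceAux_cons_swap ω hAlt hAdd b a r
      rw [h, ceAux_ceDiff_neg]
    rw [e3, e4] at e2
    linear_combination e1 + e2

theorem ceAux_ceDiff_move (br_skew : ∀ φ ψ : E, br φ ψ = - br ψ φ)
    (hbr : ∀ (a x y : E), br a (x + y) = br a x + br a y) :
    ∀ (p : ℕ) (ω : (Fin (p + 1) → E) → R)
    (hAlt : ∀ (v : Fin (p + 1) → E) (i j : Fin (p + 1)), i ≠ j → v i = v j → ω v = 0)
    (hAdd : ∀ (v : Fin (p + 1) → E) (i : Fin (p + 1)) (x y : E),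
      ω (Function.update v i (x + y)) = ω (Function.update v i x) + ω (Function.update v i y))
    (χ : Fin (p + 2) → E) (j : Fin (p + 2)) (β : E),
    ceDiff ρ br (p + 1) ω (Function.update χ j β)
      = ((-1 : ℤ) ^ (j : ℕ)) • ceDiff ρ br (p + 1) ω (Fin.cons β (j.removeNth χ)) := by
  intro p
  induction p with
  | zero =>
    intro ω hAlt hAdd χ j β
    refine Fin.cases ?_ (fun j' => ?_) j
    · rw [ceAux_update_zero_cons, Fin.removeNth_zero]
      simp
    · conv_lhs => rw [← Fin.cons_self_tail χ, ← Fin.cons_update]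
      rw [ceAux_master_nice ρ br ω hAlt hAdd (χ 0) (Function.update (Fin.tail χ) j' β)]
      rw [ceAux_nice_move 0 (ceAux_lie ρ br (χ 0) ω)
        (ceAux_lie_alt ρ br (χ 0) ω hAlt hAdd) (ceAux_lie_add ρ br (χ 0) ω hbr hAdd)
        (Fin.tail χ) j' β]
      rw [ceAux_move1 (ceDiff ρ br 0 (ceAux_iota (χ 0) ω)) (Fin.tail χ) j' β]
      rw [← smul_sub,
        ← ceAux_master_nice ρ br ω hAlt hAdd (χ 0) (Fin.cons β (j'.removeNth (Fin.tail χ)))]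
      rw [ceAux_ceDiff_swap ρ br br_skew 0 ω hAlt hAdd (χ 0) β (j'.removeNth (Fin.tail χ))]
      rw [ceAux_removeNth_succ j' χ, Fin.val_succ, pow_succ, mul_neg_one, neg_smul, smul_neg]
  | succ q ih =>
    intro ω hAlt hAdd χ j β
    refine Fin.cases ?_ (fun j' => ?_) j
    · rw [ceAux_update_zero_cons, Fin.removeNth_zero]
      simp
    · conv_lhs => rw [← Fin.cons_self_tail χ, ← Fin.cons_update]
      rw [ceAux_master_nice ρ br ω hAlt hAdd (χ 0) (Function.update (Fin.tail χ) j' β)]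
      rw [ceAux_nice_move (q + 1) (ceAux_lie ρ br (χ 0) ω)
        (ceAux_lie_alt ρ br (χ 0) ω hAlt hAdd) (ceAux_lie_add ρ br (χ 0) ω hbr hAdd)
        (Fin.tail χ) j' β]
      rw [ih (ceAux_iota (χ 0) ω) (ceAux_iota_alt (χ 0) ω hAlt)
        (ceAux_iota_add (χ 0) ω hAdd) (Fin.tail χ) j' β]
      rw [← smul_sub,
        ← ceAux_master_nice ρ br ω hAlt hAdd (χ 0) (Fin.cons β (j'.removeNth (Fin.tail χ)))]
      rw [ceAux_ceDiff_swap ρ br br_skew (q + 1) ω hAlt hAdd (χ 0) β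
        (j'.removeNth (Fin.tail χ))]
      rw [ceAux_removeNth_succ j' χ, Fin.val_succ, pow_succ, mul_neg_one, neg_smul, smul_neg]

end CeAux12



section CeAux13
variable {k R E : Type*} [Field k] [CommRing R] [Algebra k R]
  [AddCommGroup E] [Module k E] [Module R E] [IsScalarTower k R E]
variable (ρ : E →ₗ[R] Derivation k R R) (br : E → E → E)

theorem ceAux_iota_smul {n : ℕ} (X : E) (η : (Fin (n + 1) → E) → R)
    (hSmul : ∀ (v : Fin (n + 1) → E) (i : Fin (n + 1)) (f : R) (x : E),
      η (Function.update v i (f • x)) = f • η (Function.update v i x)) :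
    ∀ (v : Fin n → E) (i : Fin n) (f : R) (x : E),
      ceAux_iota X η (Function.update v i (f • x))
        = f • ceAux_iota X η (Function.update v i x) := by
  intro v i f x
  unfold ceAux_iota
  rw [Fin.cons_update, Fin.cons_update]
  exact hSmul (Fin.cons X v) i.succ f x

end CeAux13


/-- For an `H`-twisted Lie–Rinehart algebra and a scalar-valued alternating
`R`-multilinear `p`-form `ω` annihilated by insertion of `H`, the Chevalley–Eilenberg-type
differential squares to zero: `D(Dω) = 0`. -/
theorem ceDiff_squared_eq_zero_on_naive_cochains
    {k R E : Type*} [Field k] [CommRing R] [Algebra k R]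
    [AddCommGroup E] [Module k E] [Module R E] [IsScalarTower k R E]
    (ρ : E →ₗ[R] Derivation k R R)
    (br : E → E → E)
    (br_add_left : ∀ φ₁ φ₂ ψ : E, br (φ₁ + φ₂) ψ = br φ₁ ψ + br φ₂ ψ)
    (br_smul_left : ∀ (a : k) (φ ψ : E), br (a • φ) ψ = a • br φ ψ)
    (br_skew : ∀ φ ψ : E, br φ ψ = - br ψ φ)
    (H : E →ₗ[R] E →ₗ[R] E →ₗ[R] E)
    (H_alt₁₂ : ∀ φ ψ : E, H φ φ ψ = 0)
    (H_alt₂₃ : ∀ φ ψ : E, H φ ψ ψ = 0)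
    (H_ker : ∀ φ ψ χ : E, ρ (H φ ψ χ) = 0)
    (leibniz : ∀ (φ : E) (f : R) (ψ : E), br φ (f • ψ) = ρ φ f • ψ + f • br φ ψ)
    (jacobi : ∀ φ ψ₁ ψ₂ : E,
      br φ (br ψ₁ ψ₂) = br (br φ ψ₁) ψ₂ + br ψ₁ (br φ ψ₂) + H φ ψ₁ ψ₂)
    (anchor_br : ∀ φ ψ : E, ρ (br φ ψ) = ⁅ρ φ, ρ ψ⁆)
    (p : ℕ) (ω : (Fin p → E) → R)
    -- ω is alternating
    (ω_alt : ∀ (v : Fin p → E) (i j : Fin p), i ≠ j → v i = v j → ω v = 0)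
    -- ω is R-multilinear
    (ω_add : ∀ (v : Fin p → E) (i : Fin p) (x y : E),
      ω (Function.update v i (x + y)) = ω (Function.update v i x) + ω (Function.update v i y))
    (ω_smul : ∀ (v : Fin p → E) (i : Fin p) (f : R) (x : E),
      ω (Function.update v i (f • x)) = f • ω (Function.update v i x))
    -- ω is annihilated by insertion of H (vacuous for p = 0)
    (ω_H : ∀ (x y z : E) (v : Fin p → E) (i : Fin p),
      ω (Function.update v i (H x y z)) = 0) :
    ∀ ψ : Fin (p + 2) → E, ceDiff ρ br (p + 1) (ceDiff ρ br p ω) ψ = 0 := by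
  have hbr : ∀ (a x y : E), br a (x + y) = br a x + br a y := by
    intro a x y
    rw [br_skew a (x + y), br_add_left, neg_add, ← br_skew, ← br_skew]
  induction p with
  | zero =>
    intro ψ
    rw [← Fin.cons_self_tail ψ]
    rw [ceAux_masterZero ρ br (ceDiff ρ br 0 ω) (ψ 0) (Fin.tail ψ)]
    obtain ⟨c, hc⟩ : ∃ c, ∀ u : Fin 0 → E, ω u = c :=
      ⟨ω (fun i => i.elim0), fun u => congrArg ω (ceAux_fin0_eq _ _)⟩
    simp only [ceAux_lie, ceAux_iota, ceDiff, Fin.sum_univ_succ, Fin.sum_univ_zero,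
      add_zero, Fin.val_zero, pow_zero, one_smul, Function.update_self, hc,
      Fin.cons_zero, Fin.cons_succ]
    rw [anchor_br, Derivation.commutator_apply]
    ring
  | succ q ih =>
    intro ψ
    rw [← Fin.cons_self_tail ψ]
    rw [ceAux_masterSucc ρ br (ceDiff ρ br (q + 1) ω)
      (ceAux_ceDiff_swap ρ br br_skew q ω ω_alt ω_add)
      (ceAux_ceDiff_move ρ br br_skew hbr q ω ω_alt ω_add)
      (ψ 0) (Fin.tail ψ)]
    have h1 : ceAux_iota (ψ 0) (ceDiff ρ br (q + 1) ω)
        = fun r => ceAux_lie ρ br (ψ 0) ω r - ceDiff ρ br q (ceAux_iota (ψ 0) ω) r :=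
      funext fun r => ceAux_master_nice ρ br ω ω_alt ω_add (ψ 0) r
    rw [h1, ceAux_ceDiff_sub]
    have h2 := ceAux_lie_ceDiff ρ br H hbr jacobi anchor_br (q + 1) ω ω_alt ω_add ω_H
      (ψ 0) (Fin.tail ψ)
    have h3 := ih (ceAux_iota (ψ 0) ω) (ceAux_iota_alt (ψ 0) ω ω_alt)
      (ceAux_iota_add (ψ 0) ω ω_add) (ceAux_iota_smul (ψ 0) ω ω_smul)
      (ceAux_iota_H H (ψ 0) ω ω_H) (Fin.tail ψ)
    linear_combination h2 + h3
end

section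
/- Let (R, E, [.,.], ρ) be a Lie–Rinehart algebra (untwisted Jacobi identity) and let B : E × E → ker ρ be an alternating R-bilinear map. Define the modified bracket [φ,ψ]_B := [φ,ψ] + B(φ,ψ). Then: (a) [.,.]_B is skew-symmetric k-bilinear and satisfies the Leibniz rule [φ, f·ψ]_B = ρ(φ)(f)·ψ + f·[φ,ψ]_B, and ρ([φ,ψ]_B) = ρ([φ,ψ]); (b) its Jacobiator is [φ,[ψ₁,ψ₂]_B]_B − [[φ,ψ₁]_B,ψ₂]_B − [ψ₁,[φ,ψ₂]_B]_B = (D₀B)(φ,ψ₁,ψ₂) + B(φ, B(ψ₁,ψ₂)) + B(ψ₂, B(φ,ψ₁)) − B(ψ₁, B(φ,ψ₂)), where D₀B(ψ₀,ψ₁,ψ₂) = [ψ₀,B(ψ₁,ψ₂)] − [ψ₁,B(ψ₀,ψ₂)] + [ψ₂,B(ψ₀,ψ₁)] − B([ψ₀,ψ₁],ψ₂) + B([ψ₀,ψ₂],ψ₁) − B([ψ₁,ψ₂],ψ₀); in particular the Jacobiator takes values in ker ρ. (c) If moreover B(χ,κ) = 0 whenever κ ∈ ker ρ, then the Jacobiator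 equals D₀B, so (E, ρ, [.,.]_B) satisfies the twisted Jacobi identity with twist H = D₀B. -/
/-- Let `(R,E,[.,.],ρ)` be a Lie–Rinehart algebra and `B : E × E → ker ρ`
an alternating `R`-bilinear map.  For the modified bracket `[φ,ψ]_B := [φ,ψ] + B(φ,ψ)`:
(a) `[.,.]_B` is skew-symmetric `k`-bilinear, satisfies the Leibniz rule, and
    `ρ([φ,ψ]_B) = ρ([φ,ψ])`;
(b) its Jacobiator equals `D₀B + B(φ,B(ψ₁,ψ₂)) + B(ψ₂,B(φ,ψ₁)) − B(ψ₁,B(φ,ψ₂))`,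
    and in particular takes values in `ker ρ`;
(c) if `B(χ,κ) = 0` for `κ ∈ ker ρ`, the Jacobiator equals `D₀B`, i.e. `(E,ρ,[.,.]_B)`
    satisfies the twisted Jacobi identity with twist `H = D₀B`. -/
theorem modified_bracket_of_LieRinehart
    {k R E : Type*} [Field k] [CommRing R] [Algebra k R]
    [AddCommGroup E] [Module k E] [Module R E] [IsScalarTower k R E]
    (ρ : E →ₗ[R] Derivation k R R)
    (br : E → E → E)
    (br_add_left : ∀ φ₁ φ₂ ψ : E, br (φ₁ + φ₂) ψ = br φ₁ ψ + br φ₂ ψ)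
    (br_smul_left : ∀ (a : k) (φ ψ : E), br (a • φ) ψ = a • br φ ψ)
    (br_skew : ∀ φ ψ : E, br φ ψ = - br ψ φ)
    (leibniz : ∀ (φ : E) (f : R) (ψ : E), br φ (f • ψ) = ρ φ f • ψ + f • br φ ψ)
    -- untwisted Jacobi identity: (E, br) is a Lie algebra
    (jacobi : ∀ φ ψ₁ ψ₂ : E, br φ (br ψ₁ ψ₂) = br (br φ ψ₁) ψ₂ + br ψ₁ (br φ ψ₂))
    (anchor_br : ∀ φ ψ : E, ρ (br φ ψ) = ⁅ρ φ, ρ ψ⁆)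
    -- B is an alternating R-bilinear map with values in ker ρ
    (B : E →ₗ[R] E →ₗ[R] E)
    (B_alt : ∀ φ : E, B φ φ = 0)
    (B_ker : ∀ φ ψ : E, ρ (B φ ψ) = 0)
    -- the modified bracket and the twist D₀B
    (brB : E → E → E) (hbrB : ∀ φ ψ : E, brB φ ψ = br φ ψ + B φ ψ)
    (D₀B : E → E → E → E)
    (hD₀B : ∀ ψ₀ ψ₁ ψ₂ : E, D₀B ψ₀ ψ₁ ψ₂ =
      br ψ₀ (B ψ₁ ψ₂) - br ψ₁ (B ψ₀ ψ₂) + br ψ₂ (B ψ₀ ψ₁)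
        - B (br ψ₀ ψ₁) ψ₂ + B (br ψ₀ ψ₂) ψ₁ - B (br ψ₁ ψ₂) ψ₀) :
    -- (a) skew-symmetry, k-bilinearity, Leibniz rule and anchor compatibility of [.,.]_B
    ((∀ φ ψ : E, brB φ ψ = - brB ψ φ) ∧
     (∀ φ₁ φ₂ ψ : E, brB (φ₁ + φ₂) ψ = brB φ₁ ψ + brB φ₂ ψ) ∧
     (∀ φ ψ₁ ψ₂ : E, brB φ (ψ₁ + ψ₂) = brB φ ψ₁ + brB φ ψ₂) ∧
     (∀ (a : k) (φ ψ : E), brB (a • φ) ψ = a • brB φ ψ) ∧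
     (∀ (a : k) (φ ψ : E), brB φ (a • ψ) = a • brB φ ψ) ∧
     (∀ (φ : E) (f : R) (ψ : E), brB φ (f • ψ) = ρ φ f • ψ + f • brB φ ψ) ∧
     (∀ φ ψ : E, ρ (brB φ ψ) = ρ (br φ ψ))) ∧
    -- (b) the Jacobiator of [.,.]_B
    ((∀ φ ψ₁ ψ₂ : E,
      brB φ (brB ψ₁ ψ₂) - brB (brB φ ψ₁) ψ₂ - brB ψ₁ (brB φ ψ₂) =
        D₀B φ ψ₁ ψ₂ + B φ (B ψ₁ ψ₂) + B ψ₂ (B φ ψ₁) - B ψ₁ (B φ ψ₂)) ∧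
     (∀ φ ψ₁ ψ₂ : E,
      ρ (brB φ (brB ψ₁ ψ₂) - brB (brB φ ψ₁) ψ₂ - brB ψ₁ (brB φ ψ₂)) = 0)) ∧
    -- (c) if B vanishes on ker ρ in the second slot, the Jacobiator is exactly D₀B
    ((∀ χ κ : E, ρ κ = 0 → B χ κ = 0) →
      ∀ φ ψ₁ ψ₂ : E,
        brB φ (brB ψ₁ ψ₂) - brB (brB φ ψ₁) ψ₂ - brB ψ₁ (brB φ ψ₂) = D₀B φ ψ₁ ψ₂) := by
  -- derived symmetry/additivity facts
  have Bskew : ∀ φ ψ : E, B φ ψ = - B ψ φ := by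
    intro φ ψ
    have h := B_alt (φ + ψ)
    simp only [map_add, LinearMap.add_apply, B_alt φ, B_alt ψ, zero_add, add_zero] at h
    exact eq_neg_of_add_eq_zero_right h
  have br_add_right : ∀ φ ψ₁ ψ₂ : E, br φ (ψ₁ + ψ₂) = br φ ψ₁ + br φ ψ₂ := by
    intro φ ψ₁ ψ₂
    rw [br_skew, br_add_left, neg_add, ← br_skew, ← br_skew]
  have br_smul_right : ∀ (a : k) (φ ψ : E), br φ (a • ψ) = a • br φ ψ := by
    intro a φ ψ
    rw [br_skew, br_smul_left, ← smul_neg, ← br_skew]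
  refine ⟨⟨?_, ?_, ?_, ?_, ?_, ?_, ?_⟩, ?_⟩
  · intro φ ψ
    rw [hbrB, hbrB, br_skew, Bskew, neg_add]
  · intro φ₁ φ₂ ψ
    simp only [hbrB, br_add_left, map_add, LinearMap.add_apply]; abel
  · intro φ ψ₁ ψ₂
    simp only [hbrB, br_add_right, map_add]; abel
  · intro a φ ψ
    rw [hbrB, hbrB, br_smul_left, ← algebraMap_smul R a φ, map_smul,
      LinearMap.smul_apply, algebraMap_smul, smul_add]
  · intro a φ ψ
    rw [hbrB, hbrB, br_smul_right, ← algebraMap_smul R a ψ, map_smul,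
      algebraMap_smul, smul_add]
  · intro φ f ψ
    simp only [hbrB, leibniz, map_smul, smul_add]; abel
  · intro φ ψ
    simp only [hbrB, map_add, B_ker, add_zero]
  have hb1 : ∀ φ ψ₁ ψ₂ : E,
      brB φ (brB ψ₁ ψ₂) - brB (brB φ ψ₁) ψ₂ - brB ψ₁ (brB φ ψ₂) =
        D₀B φ ψ₁ ψ₂ + B φ (B ψ₁ ψ₂) + B ψ₂ (B φ ψ₁) - B ψ₁ (B φ ψ₂) := by
    intro φ ψ₁ ψ₂
    simp only [hbrB, hD₀B, br_add_right, br_add_left, map_add, LinearMap.add_apply,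
      jacobi φ ψ₁ ψ₂]
    rw [Bskew φ (br ψ₁ ψ₂), Bskew ψ₁ (br φ ψ₂), Bskew (B φ ψ₁) ψ₂,
      br_skew (B φ ψ₁) ψ₂]
    abel
  refine ⟨⟨hb1, ?_⟩, ?_⟩
  · intro φ ψ₁ ψ₂
    rw [hb1]
    simp [hD₀B, anchor_br, B_ker]
  · intro hvan φ ψ₁ ψ₂
    rw [hb1, hvan φ (B ψ₁ ψ₂) (B_ker _ _), hvan ψ₂ (B φ ψ₁) (B_ker _ _),
      hvan ψ₁ (B φ ψ₂) (B_ker _ _)]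
    abel
end

section
/- Let b : ℝ³ × ℝ³ → ℝ³ be the twisted cross-product bracket b(x,y) := x × y + (x₁y₂ − x₂y₁)·e₁. If α is a linear functional on ℝ³ satisfying α(e₂) = 0 and α(b(x,y)) = 0 for all x, y ∈ ℝ³, then α = 0. Consequently the differential D, Dα(x,y) = −α(b(x,y)), is injective on the naive 1-cochains C^{1,0} = {α : α(e₂) = 0}, and the first naive cohomology H^{1,0}_naive of this twisted Lie algebra vanishes. -/
/-- The twisted cross-product bracket on `ℝ³`:
`b(x,y) = x × y + (x₁y₂ − x₂y₁)·e₁`. -/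
noncomputable def twistedCross (x y : Fin 3 → ℝ) : Fin 3 → ℝ :=
  crossProduct x y + (x 0 * y 1 - x 1 * y 0) • (Pi.single 0 1 : Fin 3 → ℝ)

lemma tc23 : twistedCross (Pi.single 1 1) (Pi.single 2 1) = Pi.single 0 1 := by
  funext i
  fin_cases i <;>
    simp [twistedCross, cross_apply, Pi.single_apply]

lemma tc12 : twistedCross (Pi.single 0 1) (Pi.single 1 1)
    = Pi.single 0 1 + Pi.single 2 1 := by
  funext i
  fin_cases i <;>
    simp [twistedCross, cross_apply, Pi.single_apply]

lemma key (α : Module.Dual ℝ (Fin 3 → ℝ))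
    (h1 : α (Pi.single 1 1 : Fin 3 → ℝ) = 0)
    (h2 : ∀ x y : Fin 3 → ℝ, α (twistedCross x y) = 0) : α = 0 := by
  have ha : α (Pi.single 0 1 : Fin 3 → ℝ) = 0 := by
    have := h2 (Pi.single 1 1) (Pi.single 2 1)
    rwa [tc23] at this
  have hc : α (Pi.single 2 1 : Fin 3 → ℝ) = 0 := by
    have := h2 (Pi.single 0 1) (Pi.single 1 1)
    rw [tc12, map_add, ha] at this
    linarith
  apply Module.Basis.ext (Pi.basisFun ℝ (Fin 3))
  intro i
  fin_cases i <;> simp_all [Pi.basisFun_apply]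

/-- a linear functional `α` on `ℝ³` with `α(e₂) = 0` that annihilates all
brackets `b(x,y)` is zero.  Consequently the differential `Dα(x,y) = −α(b(x,y))` is
injective on the naive 1-cochains `C^{1,0} = {α : α(e₂) = 0}`, and the first naive
cohomology of this twisted Lie algebra vanishes. -/
theorem twistedCross_first_naive_cohomology_vanishes :
    -- D has trivial kernel on C^{1,0}
    (∀ α : Module.Dual ℝ (Fin 3 → ℝ),
      α (Pi.single 1 1 : Fin 3 → ℝ) = 0 →
      (∀ x y : Fin 3 → ℝ, α (twistedCross x y) = 0) → α = 0) ∧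
    -- hence D is injective on C^{1,0}
    (∀ α β : Module.Dual ℝ (Fin 3 → ℝ),
      α (Pi.single 1 1 : Fin 3 → ℝ) = 0 → β (Pi.single 1 1 : Fin 3 → ℝ) = 0 →
      (∀ x y : Fin 3 → ℝ, -α (twistedCross x y) = -β (twistedCross x y)) → α = β) := by
  refine ⟨key, fun α β hα hβ h => ?_⟩
  have : α - β = 0 := by
    apply key (α - β)
    · simp [hα, hβ]
    · intro x y
      have := h x y
      simp only [LinearMap.sub_apply]
      linarith
  exact sub_eq_zero.mp this
end
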